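/- arXiv:2408.05607 — 2 statements merged into one kernel-verified Lean document; each statement's English description precedes it below -/
import Mathlib

section
/- Let C be a category with finite colimits, S a finite set with |S| ≥ 2, and s ∈ S. For any punctured S-cube F : P_{≤|S|−1}(S) → C, the commutative square whose top-left corner is colim_{I ∈ P_{≤|S|−2}(S∖{s})} F(I), whose top-right corner is colim_{I ∈ P_{≤|S|−2}(S∖{s})} F(I ∪ {s}), whose bottom-left corner is F(S∖{s}), and whose bottom-right corner is colim_{I ∈ P_{≤|S|−1}(S)} F(I), with all maps the evident canonical comparison maps, is a pushout square in C. (Lemma 3.1.11.) -/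
open CategoryTheory CategoryTheory.Limits

/- Finite posets (with decidable order) are finite categories, so that the colimits below
exist in a category with finite colimits. -/
instance fintypeHomOfPreorder {α : Type} [Preorder α] [DecidableRel (α := α) (· ≤ ·)]
    (X Y : α) : Fintype (X ⟶ Y) :=
  if h : X ≤ Y then Fintype.ofSubsingleton (homOfLE h)
  else haveI : IsEmpty (X ⟶ Y) := ⟨fun g => h (leOfHom g)⟩; Fintype.ofIsEmpty

instance finCategoryOfPreorder {α : Type} [Preorder α] [Fintype α]
    [DecidableRel (α := α) (· ≤ ·)] : FinCategory α where

variable {C : Type*} [Category C] [HasFiniteColimits C]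
variable (S : Type) [Fintype S] [DecidableEq S]

/-- The punctured cube poset `P_{≤ |S| - 1}(S)` of subsets of `S` of cardinality `≤ |S| - 1`. -/
abbrev PuncturedCubePoset : Type := {I : Finset S // I.card ≤ Fintype.card S - 1}

/-- The poset `P_{≤ |S| - 2}(S ∖ {s})` of subsets of `S ∖ {s}` of cardinality `≤ |S| - 2`. -/
abbrev SmallCubePoset (s : S) : Type :=
  {I : Finset S // s ∉ I ∧ I.card ≤ Fintype.card S - 2}

variable {S}

/-- `I ↦ I`, as a functor `P_{≤|S|-2}(S∖{s}) ⥤ P_{≤|S|-1}(S)`. -/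
noncomputable def inclFunctor (hS : 2 ≤ Fintype.card S) (s : S) :
    SmallCubePoset S s ⥤ PuncturedCubePoset S :=
  Monotone.functor (f := fun I => ⟨I.1, by have := I.2.2; omega⟩)
    (fun _ _ h => by exact h)

/-- `I ↦ I ∪ {s}`, as a functor `P_{≤|S|-2}(S∖{s}) ⥤ P_{≤|S|-1}(S)`. -/
noncomputable def insertFunctor (hS : 2 ≤ Fintype.card S) (s : S) :
    SmallCubePoset S s ⥤ PuncturedCubePoset S :=
  Monotone.functor
    (f := fun I => ⟨insert s I.1, by
      rw [Finset.card_insert_of_notMem I.2.1]; have := I.2.2; omega⟩)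
    (fun _ _ h => by exact Finset.insert_subset_insert s h)

/-- The object `S ∖ {s}` of the punctured cube poset. -/
def erasePt (hS : 2 ≤ Fintype.card S) (s : S) : PuncturedCubePoset S :=
  ⟨Finset.univ.erase s, by rw [Finset.card_erase_of_mem (Finset.mem_univ s),
    Finset.card_univ]⟩

/-- The top map of the square, `colim_{I} F(I) ⟶ colim_{I} F(I ∪ {s})`, induced by the
natural transformation with components `F(I ⊆ I ∪ {s})`. -/
noncomputable def topMap (hS : 2 ≤ Fintype.card S) (s : S)
    (F : PuncturedCubePoset S ⥤ C) :
    colimit (inclFunctor hS s ⋙ F) ⟶ colimit (insertFunctor hS s ⋙ F) :=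
  colimMap
    { app := fun I => F.map (homOfLE (by
        exact (Finset.subset_insert s I.1 : I.1 ≤ insert s I.1)))
      naturality := fun I J g => by
        dsimp [inclFunctor, insertFunctor]
        rw [← F.map_comp, ← F.map_comp]
        congr 1 }

/-- The left map of the square, `colim_{I} F(I) ⟶ F(S ∖ {s})`. -/
noncomputable def leftMap (hS : 2 ≤ Fintype.card S) (s : S)
    (F : PuncturedCubePoset S ⥤ C) :
    colimit (inclFunctor hS s ⋙ F) ⟶ F.obj (erasePt hS s) :=
  colimit.desc (inclFunctor hS s ⋙ F)
    { pt := F.obj (erasePt hS s)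
      ι :=
        { app := fun I => F.map (homOfLE (by
            exact (Finset.subset_erase.mpr ⟨Finset.subset_univ _, I.2.1⟩ :
              I.1 ≤ Finset.univ.erase s)))
          naturality := fun I J g => by
            dsimp [inclFunctor, erasePt]
            rw [Category.comp_id, ← F.map_comp]
            congr 1 } }

/-- The right map of the square, `colim_{I} F(I ∪ {s}) ⟶ colim F`. -/
noncomputable def rightMap (hS : 2 ≤ Fintype.card S) (s : S)
    (F : PuncturedCubePoset S ⥤ C) :
    colimit (insertFunctor hS s ⋙ F) ⟶ colimit F :=
  colimit.pre F (insertFunctor hS s)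

/-- The bottom map of the square, `F(S ∖ {s}) ⟶ colim F`. -/
noncomputable def bottomMap (hS : 2 ≤ Fintype.card S) (s : S)
    (F : PuncturedCubePoset S ⥤ C) :
    F.obj (erasePt hS s) ⟶ colimit F :=
  colimit.ι F (erasePt hS s)

/-- For `J` in the punctured poset with `s ∈ J`, the object `J ∖ {s}` of the small poset. -/
def smallOf (s : S) (J : PuncturedCubePoset S) (h : s ∈ J.1) : SmallCubePoset S s :=
  ⟨J.1.erase s, Finset.notMem_erase s J.1, by
    rw [Finset.card_erase_of_mem h]; have := J.2; omega⟩

lemma le_insert_smallOf (hS : 2 ≤ Fintype.card S) (s : S)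
    (J : PuncturedCubePoset S) (h : s ∈ J.1) :
    J ≤ (insertFunctor hS s).obj (smallOf s J h) :=
  show J.1 ≤ insert s (J.1.erase s) from (Finset.insert_erase h).symm.le

lemma le_erasePt (hS : 2 ≤ Fintype.card S) (s : S)
    (J : PuncturedCubePoset S) (h : s ∉ J.1) : J ≤ erasePt hS s :=
  show J.1 ≤ Finset.univ.erase s from
    Finset.subset_erase.mpr ⟨Finset.subset_univ _, h⟩

lemma ι_topMap (hS : 2 ≤ Fintype.card S) (s : S) (F : PuncturedCubePoset S ⥤ C)
    (I : SmallCubePoset S s) :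
    colimit.ι (inclFunctor hS s ⋙ F) I ≫ topMap hS s F =
      F.map (homOfLE (show ((inclFunctor hS s).obj I : PuncturedCubePoset S) ≤
          (insertFunctor hS s).obj I from Finset.subset_insert s I.1)) ≫
        colimit.ι (insertFunctor hS s ⋙ F) I := by
  simp [topMap]

lemma ι_leftMap (hS : 2 ≤ Fintype.card S) (s : S) (F : PuncturedCubePoset S ⥤ C)
    (I : SmallCubePoset S s) :
    colimit.ι (inclFunctor hS s ⋙ F) I ≫ leftMap hS s F =
      F.map (homOfLE (show ((inclFunctor hS s).obj I : PuncturedCubePoset S) ≤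
          erasePt hS s from Finset.subset_erase.mpr ⟨Finset.subset_univ _, I.2.1⟩)) := by
  simp [leftMap]

/-- Given maps out of the right and bottom corners that agree, the induced cocone on `F`. -/
noncomputable def auxCocone (hS : 2 ≤ Fintype.card S) (s : S)
    (F : PuncturedCubePoset S ⥤ C) {W : C}
    (g1 : colimit (insertFunctor hS s ⋙ F) ⟶ W) (g2 : F.obj (erasePt hS s) ⟶ W)
    (hw : topMap hS s F ≫ g1 = leftMap hS s F ≫ g2) : Cocone F where
  pt := W
  ι :=
    { app := fun J =>
        if h : s ∈ J.1 then
          F.map (homOfLE (le_insert_smallOf hS s J h)) ≫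
            colimit.ι (insertFunctor hS s ⋙ F) (smallOf s J h) ≫ g1
        else
          F.map (homOfLE (le_erasePt hS s J h)) ≫ g2
      naturality := by
        intro J K f
        dsimp only [Functor.const_obj_obj, Functor.const_obj_map]
        rw [Category.comp_id]
        by_cases hK : s ∈ K.1
        · rw [dif_pos hK]
          by_cases hJ : s ∈ J.1
          · rw [dif_pos hJ]
            have f' : smallOf s J hJ ⟶ smallOf s K hK :=
              homOfLE (Finset.erase_subset_erase s (leOfHom f))
            rw [← colimit.w_assoc (insertFunctor hS s ⋙ F) f' g1]
            simp only [Functor.comp_map, ← Category.assoc, ← F.map_comp]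
            rfl
          · rw [dif_neg hJ]
            have hJs : J.1 ⊆ K.1.erase s := Finset.subset_erase.mpr ⟨leOfHom f, hJ⟩
            have hJcard : J.1.card ≤ Fintype.card S - 2 := by
              have h2 := Finset.card_le_card hJs
              rw [Finset.card_erase_of_mem hK] at h2
              have := K.2
              omega
            set Js : SmallCubePoset S s := ⟨J.1, hJ, hJcard⟩ with hJsdef
            have f' : Js ⟶ smallOf s K hK := homOfLE hJs
            have e3 : F.map (homOfLE (show ((inclFunctor hS s).obj Js :
                  PuncturedCubePoset S) ≤ (insertFunctor hS s).obj Js from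
                  Finset.subset_insert s Js.1)) ≫
                  colimit.ι (insertFunctor hS s ⋙ F) Js ≫ g1 =
                F.map (homOfLE (show ((inclFunctor hS s).obj Js :
                  PuncturedCubePoset S) ≤ erasePt hS s from
                  Finset.subset_erase.mpr ⟨Finset.subset_univ _, Js.2.1⟩)) ≫ g2 := by
              rw [← Category.assoc, ← ι_topMap hS s F Js, ← ι_leftMap hS s F Js,
                Category.assoc, hw, ← Category.assoc]
            have lhs_eq : F.map f ≫ F.map (homOfLE (le_insert_smallOf hS s K hK)) ≫
                colimit.ι (insertFunctor hS s ⋙ F) (smallOf s K hK) ≫ g1 =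
                F.map (homOfLE (show ((inclFunctor hS s).obj Js :
                  PuncturedCubePoset S) ≤ (insertFunctor hS s).obj Js from
                  Finset.subset_insert s Js.1)) ≫
                  colimit.ι (insertFunctor hS s ⋙ F) Js ≫ g1 := by
              rw [← colimit.w_assoc (insertFunctor hS s ⋙ F) f' g1]
              simp only [Functor.comp_map, ← Category.assoc, ← F.map_comp]
              rfl
            exact lhs_eq.trans e3
        · have hJ : s ∉ J.1 := fun h => hK (leOfHom f h)
          rw [dif_neg hJ, dif_neg hK, ← Category.assoc, ← F.map_comp]
          rfl }

attribute [reducible] auxCocone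

/-- **Lemma 3.1.11.** For a category `C` with finite colimits, a finite set `S` with
`|S| ≥ 2`, an element `s ∈ S` and a punctured `S`-cube `F : P_{≤|S|-1}(S) ⥤ C`, the square

`colim_{I ∈ P_{≤|S|-2}(S∖{s})} F(I) ⟶ colim_{I ∈ P_{≤|S|-2}(S∖{s})} F(I ∪ {s})`
`          ↓                                        ↓`
`      F(S ∖ {s})          ⟶          colim_{I ∈ P_{≤|S|-1}(S)} F(I)`

of canonical comparison maps is a pushout square in `C`. -/
theorem punctured_cube_colimit_isPushout
    (hS : 2 ≤ Fintype.card S) (s : S) (F : PuncturedCubePoset S ⥤ C) :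
    IsPushout (topMap hS s F) (leftMap hS s F) (rightMap hS s F) (bottomMap hS s F) := by
  have w : topMap hS s F ≫ rightMap hS s F = leftMap hS s F ≫ bottomMap hS s F := by
    apply colimit.hom_ext
    intro I
    rw [← Category.assoc, ι_topMap, ← Category.assoc, ι_leftMap]
    dsimp [rightMap, bottomMap]
    rw [Category.assoc, colimit.ι_pre, colimit.w, colimit.w]
  refine IsPushout.of_isColimit (PushoutCocone.IsColimit.mk w
    (fun c => colimit.desc F (auxCocone hS s F c.inl c.inr c.condition))
    (fun c => ?_) (fun c => ?_) (fun c m hm1 hm2 => ?_))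
  · dsimp only [rightMap]
    apply colimit.hom_ext
    intro I
    rw [colimit.ι_pre_assoc, colimit.ι_desc]
    dsimp [auxCocone]
    rw [dif_pos (show s ∈ ((insertFunctor hS s).obj I).1 from
      Finset.mem_insert_self s I.1)]
    have hle : I ≤ smallOf s ((insertFunctor hS s).obj I)
        (show s ∈ ((insertFunctor hS s).obj I).1 from Finset.mem_insert_self s I.1) :=
      (Finset.erase_insert I.2.1).symm.le
    rw [← colimit.w_assoc (insertFunctor hS s ⋙ F) (homOfLE hle) c.inl]
    rfl
  · dsimp only [bottomMap]
    rw [colimit.ι_desc]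
    dsimp [auxCocone]
    rw [dif_neg (show s ∉ (erasePt hS s).1 from Finset.notMem_erase s Finset.univ)]
    rw [F.map_id, Category.id_comp]
  · apply colimit.hom_ext
    intro J
    rw [colimit.ι_desc]
    dsimp [auxCocone]
    by_cases hJ : s ∈ J.1
    · rw [dif_pos hJ]
      have hm1' : colimit.pre F (insertFunctor hS s) ≫ m = c.inl := hm1
      rw [← colimit.w_assoc F (homOfLE (le_insert_smallOf hS s J hJ)) m,
        ← colimit.ι_pre F (insertFunctor hS s), Category.assoc, hm1']
    · rw [dif_neg hJ]
      have hm2' : colimit.ι F (erasePt hS s) ≫ m = c.inr := hm2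
      rw [← colimit.w_assoc F (homOfLE (le_erasePt hS s J hJ)) m, hm2']
end

section
/- Let C be a category with finite limits. For i = 1, 2 let S_i be a finite set and F_i : P(S_i) → C a strongly Cartesian S_i-cube, i.e., F_i is a pointwise right Kan extension of its restriction to the full subposet P_{≥|S_i|−1}(S_i) of subsets of cardinality ≥ |S_i|−1 along the inclusion P_{≥|S_i|−1}(S_i) ↪ P(S_i). Let S = S_1 ⊔ S_2 and define the S-cube F_1 □ F_2 : P(S) → C by (F_1 □ F_2)(I) = F_1(I ∩ S_1) × F_2(I ∩ S_2), with structure maps induced by those of F_1 and F_2. Then F_1 □ F_2 is strongly Cartesian; equivalently, for every I ⊆ S the canonical map (F_1 □ F_2)(I) → lim_{J ∈ P_{≥|S|−1}(S), J ⊇ I} (F_1 □ F_2)(J) is an isomorphism. (Lemma 3.1.8, for the Cartesian monoidal structure.) -/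
open CategoryTheory CategoryTheory.Limits

variable {C : Type*} [Category C] [HasFiniteLimits C]

section StronglyCartesian

variable {α : Type} [Fintype α] [DecidableEq α]

/-- The poset `P_{≥ |α| - 1}(α)_{I/}` of subsets of `α` of cardinality `≥ |α| - 1`
containing `I`. -/
abbrev CornerPoset (I : Finset α) : Type :=
  {J : Finset α // I ≤ J ∧ Fintype.card α - 1 ≤ J.card}

/-- The restriction of a cube `F : P(α) ⥤ C` to the subsets of cardinality `≥ |α| - 1`
containing `I`. -/
noncomputable def cornerDiagram (F : Finset α ⥤ C) (I : Finset α) :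
    CornerPoset I ⥤ C :=
  Monotone.functor (f := fun J => (J.1 : Finset α)) (fun _ _ h => h) ⋙ F

/-- The canonical map `F(I) ⟶ lim_{J ∈ P_{≥|α|-1}(α), J ⊇ I} F(J)`; the cube `F` is strongly
Cartesian precisely if this map is an isomorphism for every `I`. -/
noncomputable def stronglyCartesianComparison (F : Finset α ⥤ C) (I : Finset α) :
    F.obj I ⟶ limit (cornerDiagram F I) :=
  limit.lift (cornerDiagram F I)
    { pt := F.obj I
      π :=
        { app := fun J => F.map (homOfLE J.2.1)
          naturality := fun J J' g => by
            dsimp [cornerDiagram]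
            rw [Category.id_comp, ← F.map_comp]
            congr 1 } }

/-- An `α`-cube `F : P(α) ⥤ C` is *strongly Cartesian* if it is a pointwise right Kan
extension of its restriction to `P_{≥|α|-1}(α)`; equivalently (and this is the formulation
used here), if for every `I ⊆ α` the canonical map
`F(I) ⟶ lim_{J ∈ P_{≥|α|-1}(α), J ⊇ I} F(J)` is an isomorphism. -/
def StronglyCartesian (F : Finset α ⥤ C) : Prop :=
  ∀ I : Finset α, IsIso (stronglyCartesianComparison F I)

/-- Auxiliary: maps in a thin category are equal. -/
lemma thin_map_eq {β : Type} [Preorder β] (F : β ⥤ C) {X Y : β} (f g : X ⟶ Y) :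
    F.map f = F.map g := by
  congr 1
  apply Subsingleton.elim

/-- Auxiliary: an endomorphism in a thin category is mapped to the identity. -/
lemma thin_map_endo {β : Type} [Preorder β] (F : β ⥤ C) {X : β} (f : X ⟶ X) :
    F.map f = 𝟙 _ := by
  rw [thin_map_eq F f (𝟙 X), F.map_id]

/-- The cone over `cornerDiagram F I` with apex `F.obj I` whose legs are the structure maps. -/
noncomputable def cornerCone (F : Finset α ⥤ C) (I : Finset α) :
    Cone (cornerDiagram F I) where
  pt := F.obj I
  π :=
    { app := fun J => F.map (homOfLE J.2.1)
      naturality := fun J J' g => by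
        dsimp [cornerDiagram]
        rw [Category.id_comp, ← F.map_comp]
        congr 1 }

lemma comparison_eq_lift (F : Finset α ⥤ C) (I : Finset α) :
    stronglyCartesianComparison F I = limit.lift (cornerDiagram F I) (cornerCone F I) := rfl

/-- If the comparison map is an isomorphism then `cornerCone F I` is a limit cone. -/
noncomputable def isLimitCornerCone (F : Finset α ⥤ C) (I : Finset α)
    (h : IsIso (stronglyCartesianComparison F I)) : IsLimit (cornerCone F I) := by
  haveI : IsIso ((limit.isLimit (cornerDiagram F I)).lift (cornerCone F I)) := h
  exact IsLimit.ofPointIso (limit.isLimit _)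

/-- Conversely, if `cornerCone F I` is a limit cone then the comparison map is an iso. -/
lemma isIso_comparison_of_isLimit (F : Finset α ⥤ C) (I : Finset α)
    (h : IsLimit (cornerCone F I)) : IsIso (stronglyCartesianComparison F I) := by
  have e : stronglyCartesianComparison F I
      = (h.conePointUniqueUpToIso (limit.isLimit _)).hom := rfl
  rw [e]
  exact Iso.isIso_hom _

end StronglyCartesian

variable {S₁ S₂ : Type} [Fintype S₁] [DecidableEq S₁] [Fintype S₂] [DecidableEq S₂]

/-- `I ↦ I ∩ S₁`, as a functor `P(S₁ ⊔ S₂) ⥤ P(S₁)`. -/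
noncomputable def interLeft : Finset (S₁ ⊕ S₂) ⥤ Finset S₁ :=
  Monotone.functor (f := fun I => I.preimage Sum.inl Sum.inl_injective.injOn)
    (Finset.monotone_preimage Sum.inl_injective)

/-- `I ↦ I ∩ S₂`, as a functor `P(S₁ ⊔ S₂) ⥤ P(S₂)`. -/
noncomputable def interRight : Finset (S₁ ⊕ S₂) ⥤ Finset S₂ :=
  Monotone.functor (f := fun I => I.preimage Sum.inr Sum.inr_injective.injOn)
    (Finset.monotone_preimage Sum.inr_injective)

/-- The external product of two cubes: the `(S₁ ⊔ S₂)`-cube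
`(F₁ □ F₂)(I) = F₁(I ∩ S₁) × F₂(I ∩ S₂)`. -/
noncomputable def cubeProd (F₁ : Finset S₁ ⥤ C) (F₂ : Finset S₂ ⥤ C) :
    Finset (S₁ ⊕ S₂) ⥤ C :=
  Functor.prod' (interLeft ⋙ F₁) (interRight ⋙ F₂) ⋙ Functor.uncurry.obj prod.functor

lemma interLeft_obj (J : Finset (S₁ ⊕ S₂)) :
    interLeft.obj J = J.toLeft := by
  show J.preimage Sum.inl Sum.inl_injective.injOn = J.toLeft
  ext a; simp

lemma interRight_obj (J : Finset (S₁ ⊕ S₂)) :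
    interRight.obj J = J.toRight := by
  show J.preimage Sum.inr Sum.inr_injective.injOn = J.toRight
  ext a; simp

lemma cubeProd_map (F₁ : Finset S₁ ⥤ C) (F₂ : Finset S₂ ⥤ C)
    {J J' : Finset (S₁ ⊕ S₂)} (f : J ⟶ J') :
    (cubeProd F₁ F₂).map f
      = prod.map (F₁.map (interLeft.map f)) (F₂.map (interRight.map f)) := by
  dsimp [cubeProd, Functor.uncurry, prod.functor]
  rw [prod.map_map, Category.id_comp, Category.comp_id]

lemma toLeft_card_ge {J : Finset (S₁ ⊕ S₂)} (h : Fintype.card (S₁ ⊕ S₂) - 1 ≤ J.card) :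
    Fintype.card S₁ - 1 ≤ J.toLeft.card := by
  have h1 := Finset.card_toLeft_add_card_toRight (u := J)
  have h2 : J.toRight.card ≤ Fintype.card S₂ := by
    simpa using Finset.card_le_univ J.toRight
  rw [Fintype.card_sum] at h
  omega

lemma toRight_card_ge {J : Finset (S₁ ⊕ S₂)} (h : Fintype.card (S₁ ⊕ S₂) - 1 ≤ J.card) :
    Fintype.card S₂ - 1 ≤ J.toRight.card := by
  have h1 := Finset.card_toLeft_add_card_toRight (u := J)
  have h2 : J.toLeft.card ≤ Fintype.card S₁ := by
    simpa using Finset.card_le_univ J.toLeft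
  rw [Fintype.card_sum] at h
  omega

/-- The element of the corner poset of `I` obtained from a corner subset `K ⊇ I ∩ S₁`
by adjoining all of `S₂`. -/
def liftL (I : Finset (S₁ ⊕ S₂)) (K : CornerPoset I.toLeft) : CornerPoset I :=
  ⟨K.1.disjSum Finset.univ, by
    intro x hx
    rcases x with a | b
    · simpa using K.2.1 (by simpa using hx)
    · simp, by
    rw [Finset.card_disjSum, Fintype.card_sum, Finset.card_univ]
    have := K.2.2
    omega⟩

/-- The element of the corner poset of `I` obtained from a corner subset `L ⊇ I ∩ S₂`
by adjoining all of `S₁`. -/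
def liftR (I : Finset (S₁ ⊕ S₂)) (L : CornerPoset I.toRight) : CornerPoset I :=
  ⟨Finset.disjSum Finset.univ L.1, by
    intro x hx
    rcases x with a | b
    · simp
    · simpa using L.2.1 (by simpa using hx), by
    rw [Finset.card_disjSum, Fintype.card_sum, Finset.card_univ]
    have := L.2.2
    omega⟩

lemma liftL_mono (I : Finset (S₁ ⊕ S₂)) {K K' : CornerPoset I.toLeft} (h : K ≤ K') :
    liftL I K ≤ liftL I K' := by
  intro x hx
  rcases x with a | b
  · simp only [liftL, Finset.inl_mem_disjSum] at hx ⊢; exact h hx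
  · simp [liftL]

lemma liftR_mono (I : Finset (S₁ ⊕ S₂)) {L L' : CornerPoset I.toRight} (h : L ≤ L') :
    liftR I L ≤ liftR I L' := by
  intro x hx
  rcases x with a | b
  · simp [liftR]
  · simp only [liftR, Finset.inr_mem_disjSum] at hx ⊢; exact h hx

lemma le_liftL {I : Finset (S₁ ⊕ S₂)} (J : CornerPoset I) (K : CornerPoset I.toLeft)
    (h : J.1.toLeft ≤ K.1) : J ≤ liftL I K := by
  intro x hx
  rcases x with a | b
  · simp only [liftL, Finset.inl_mem_disjSum]
    exact h (by simpa using hx)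
  · simp [liftL]

lemma le_liftR {I : Finset (S₁ ⊕ S₂)} (J : CornerPoset I) (L : CornerPoset I.toRight)
    (h : J.1.toRight ≤ L.1) : J ≤ liftR I L := by
  intro x hx
  rcases x with a | b
  · simp [liftR]
  · simp only [liftR, Finset.inr_mem_disjSum]
    exact h (by simpa using hx)

lemma interLeft_liftL (I : Finset (S₁ ⊕ S₂)) (K : CornerPoset I.toLeft) :
    interLeft.obj (liftL I K).1 = K.1 := by
  rw [interLeft_obj]; exact Finset.toLeft_disjSum

lemma interRight_liftR (I : Finset (S₁ ⊕ S₂)) (L : CornerPoset I.toRight) :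
    interRight.obj (liftR I L).1 = L.1 := by
  rw [interRight_obj]; exact Finset.toRight_disjSum

lemma prodAux_fst {X A A' A'' A''' B B' : C} (a : X ⟶ A ⨯ B) (f : A ⟶ A') (g : B ⟶ B')
    (h : A' ⟶ A'') (h' : A ⟶ A''') (k : A''' ⟶ A'') (e : f ≫ h = h' ≫ k) :
    (a ≫ prod.map f g) ≫ prod.fst ≫ h = (a ≫ prod.fst ≫ h') ≫ k := by
  simp [e]

lemma prodAux_snd {X A A' B B' B'' B''' : C} (a : X ⟶ A ⨯ B) (f : A ⟶ A') (g : B ⟶ B')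
    (h : B' ⟶ B'') (h' : B ⟶ B''') (k : B''' ⟶ B'') (e : g ≫ h = h' ≫ k) :
    (a ≫ prod.map f g) ≫ prod.snd ≫ h = (a ≫ prod.snd ≫ h') ≫ k := by
  simp [e]

lemma prodAux_endo {X P A B : C} (a : X ⟶ P) (p : P ⟶ A) (u : A ⟶ B) (v : B ⟶ A)
    (e : u ≫ v = 𝟙 A) : a ≫ p = a ≫ (p ≫ u) ≫ v := by
  rw [Category.assoc, e, Category.comp_id]

lemma prodAux_fst' {X A A' A'' B B' D : C} (a : X ⟶ A ⨯ B) (f : A ⟶ A') (g : B ⟶ B')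
    (u : A ⟶ A'') (v : A'' ⟶ D) (h : A' ⟶ D) (e : u ≫ v = f ≫ h) :
    (a ≫ prod.fst ≫ u) ≫ v = (a ≫ prod.map f g) ≫ prod.fst ≫ h := by
  simp [e]

lemma prodAux_snd' {X A A' B B' B'' D : C} (a : X ⟶ A ⨯ B) (f : A ⟶ A') (g : B ⟶ B')
    (u : B ⟶ B'') (v : B'' ⟶ D) (h : B' ⟶ D) (e : u ≫ v = g ≫ h) :
    (a ≫ prod.snd ≫ u) ≫ v = (a ≫ prod.map f g) ≫ prod.snd ≫ h := by
  simp [e]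

lemma factorAux_fst {X A B A' A₀ A₁ A₂ B' B₂ : C} (u : X ⟶ A₀) (a : A₀ ⟶ A) (v : X ⟶ B)
    (x : A ⟶ A') (k : A₀ ⟶ A₁) (e : A₁ ⟶ A') (t : X ⟶ A₂ ⨯ B₂) (y : A₂ ⟶ A₁)
    (w : X ⟶ A' ⨯ B') (M : A' ⨯ B' ⟶ A₂ ⨯ B₂) (p : A' ⟶ A₂) (q : B' ⟶ B₂)
    (hs : a ≫ x = k ≫ e) (hf : u ≫ k = t ≫ prod.fst ≫ y) (hw : w ≫ M = t)
    (hM : M = prod.map p q) (he : p ≫ y ≫ e = 𝟙 A') :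
    prod.lift (u ≫ a) v ≫ prod.fst ≫ x = w ≫ prod.fst := by
  subst hM hw
  rw [prod.lift_fst_assoc, Category.assoc, hs, ← Category.assoc, hf]
  simp [he]

lemma factorAux_snd {X A B B' B₀ B₁ B₂ A' A₂ : C} (u : X ⟶ B₀) (a : B₀ ⟶ B) (v : X ⟶ A)
    (x : B ⟶ B') (k : B₀ ⟶ B₁) (e : B₁ ⟶ B') (t : X ⟶ A₂ ⨯ B₂) (y : B₂ ⟶ B₁)
    (w : X ⟶ A' ⨯ B') (M : A' ⨯ B' ⟶ A₂ ⨯ B₂) (p : A' ⟶ A₂) (q : B' ⟶ B₂)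
    (hs : a ≫ x = k ≫ e) (hf : u ≫ k = t ≫ prod.snd ≫ y) (hw : w ≫ M = t)
    (hM : M = prod.map p q) (he : q ≫ y ≫ e = 𝟙 B') :
    prod.lift v (u ≫ a) ≫ prod.snd ≫ x = w ≫ prod.snd := by
  subst hM hw
  rw [prod.lift_snd_assoc, Category.assoc, hs, ← Category.assoc, hf]
  simp [he]

/-- Transfer a cone over the corner diagram of `F₁ □ F₂` to a cone over the corner
diagram of `F₁`. -/
noncomputable def coneLeft (F₁ : Finset S₁ ⥤ C) (F₂ : Finset S₂ ⥤ C) {I : Finset (S₁ ⊕ S₂)}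
    (c : Cone (cornerDiagram (cubeProd F₁ F₂) I)) : Cone (cornerDiagram F₁ I.toLeft) where
  pt := c.pt
  π :=
    { app := fun K => c.π.app (liftL I K) ≫ prod.fst ≫
        F₁.map (homOfLE (le_of_eq (interLeft_liftL I K)))
      naturality := fun K K' g => by
        dsimp [cornerDiagram, Monotone.functor]
        rw [Category.id_comp]
        have hnat := c.w (homOfLE (liftL_mono I (leOfHom g)))
        dsimp [cornerDiagram, Monotone.functor] at hnat
        rw [← hnat, cubeProd_map]
        refine prodAux_fst (C := C) _ _ _ _ _ _ ?_
        rw [← F₁.map_comp, ← F₁.map_comp]; exact thin_map_eq F₁ _ _ }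

/-- Transfer a cone over the corner diagram of `F₁ □ F₂` to a cone over the corner
diagram of `F₂`. -/
noncomputable def coneRight (F₁ : Finset S₁ ⥤ C) (F₂ : Finset S₂ ⥤ C) {I : Finset (S₁ ⊕ S₂)}
    (c : Cone (cornerDiagram (cubeProd F₁ F₂) I)) : Cone (cornerDiagram F₂ I.toRight) where
  pt := c.pt
  π :=
    { app := fun L => c.π.app (liftR I L) ≫ prod.snd ≫
        F₂.map (homOfLE (le_of_eq (interRight_liftR I L)))
      naturality := fun L L' g => by
        dsimp [cornerDiagram, Monotone.functor]
        rw [Category.id_comp]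
        have hnat := c.w (homOfLE (liftR_mono I (leOfHom g)))
        dsimp [cornerDiagram, Monotone.functor] at hnat
        rw [← hnat, cubeProd_map]
        refine prodAux_snd (C := C) _ _ _ _ _ _ ?_
        rw [← F₂.map_comp, ← F₂.map_comp]; exact thin_map_eq F₂ _ _ }

/-- **Lemma 3.1.8** (Cartesian monoidal structure). If `F₁` and `F₂` are strongly Cartesian
cubes in a category with finite limits, then the cube
`(F₁ □ F₂)(I) = F₁(I ∩ S₁) × F₂(I ∩ S₂)` on `S = S₁ ⊔ S₂` is strongly Cartesian: for every
`I ⊆ S` the canonical map `(F₁ □ F₂)(I) ⟶ lim_{J ∈ P_{≥|S|-1}(S), J ⊇ I} (F₁ □ F₂)(J)` is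
an isomorphism. -/
theorem cubeProd_stronglyCartesian (F₁ : Finset S₁ ⥤ C) (F₂ : Finset S₂ ⥤ C)
    (h₁ : StronglyCartesian F₁) (h₂ : StronglyCartesian F₂) :
    StronglyCartesian (cubeProd F₁ F₂) := by
  intro I
  apply isIso_comparison_of_isLimit
  have hl₁ := isLimitCornerCone F₁ I.toLeft (h₁ I.toLeft)
  have hl₂ := isLimitCornerCone F₂ I.toRight (h₂ I.toRight)
  have eL : I.toLeft ≤ interLeft.obj I := le_of_eq (interLeft_obj I).symm
  have eR : I.toRight ≤ interRight.obj I := le_of_eq (interRight_obj I).symm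
  have eL' : interLeft.obj I ≤ I.toLeft := le_of_eq (interLeft_obj I)
  have eR' : interRight.obj I ≤ I.toRight := le_of_eq (interRight_obj I)
  refine IsLimit.mk (fun c =>
      prod.lift (hl₁.lift (coneLeft F₁ F₂ c) ≫ F₁.map (homOfLE eL))
        (hl₂.lift (coneRight F₁ F₂ c) ≫ F₂.map (homOfLE eR)))
    (fun c J => ?_) (fun c m hm => ?_)
  · -- factorization
    have hKle : I.toLeft ≤ J.1.toLeft := Finset.toLeft_monotone J.2.1
    have hLle : I.toRight ≤ J.1.toRight := Finset.toRight_monotone J.2.1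
    set K : CornerPoset I.toLeft := ⟨J.1.toLeft, hKle, toLeft_card_ge J.2.2⟩ with hK
    set L : CornerPoset I.toRight := ⟨J.1.toRight, hLle, toRight_card_ge J.2.2⟩ with hL
    have f₁ := hl₁.fac (coneLeft F₁ F₂ c) K
    have f₂ := hl₂.fac (coneRight F₁ F₂ c) L
    dsimp [cornerCone, coneLeft, coneRight, cornerDiagram, Monotone.functor] at f₁ f₂ ⊢
    rw [cubeProd_map]
    apply Limits.prod.hom_ext
    · erw [Category.assoc]
      erw [Limits.prod.map_fst]
      have e₂ : (K.1 : Finset S₁) ≤ interLeft.obj J.1 := le_of_eq (interLeft_obj J.1).symm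
      have split : F₁.map (homOfLE eL) ≫ F₁.map (interLeft.map (homOfLE J.2.1))
          = F₁.map (homOfLE K.2.1) ≫ F₁.map (homOfLE e₂) := by
        rw [← F₁.map_comp, ← F₁.map_comp]; exact thin_map_eq F₁ _ _
      have hw := c.w (homOfLE (le_liftL J K le_rfl))
      dsimp [cornerDiagram, Monotone.functor] at hw
      refine factorAux_fst _ _ _ _ _ _ _ _ _ _ _ _ split f₁ hw (cubeProd_map _ _ _) ?_
      rw [← F₁.map_comp, ← F₁.map_comp]; exact thin_map_endo F₁ _
    · erw [Category.assoc]
      erw [Limits.prod.map_snd]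
      have e₂ : (L.1 : Finset S₂) ≤ interRight.obj J.1 := le_of_eq (interRight_obj J.1).symm
      have split : F₂.map (homOfLE eR) ≫ F₂.map (interRight.map (homOfLE J.2.1))
          = F₂.map (homOfLE L.2.1) ≫ F₂.map (homOfLE e₂) := by
        rw [← F₂.map_comp, ← F₂.map_comp]; exact thin_map_eq F₂ _ _
      have hw := c.w (homOfLE (le_liftR J L le_rfl))
      dsimp [cornerDiagram, Monotone.functor] at hw
      refine factorAux_snd _ _ _ _ _ _ _ _ _ _ _ _ split f₂ hw (cubeProd_map _ _ _) ?_
      rw [← F₂.map_comp, ← F₂.map_comp]; exact thin_map_endo F₂ _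
  · -- uniqueness
    have keyL : m ≫ prod.fst ≫ F₁.map (homOfLE eL') = hl₁.lift (coneLeft F₁ F₂ c) := by
      apply hl₁.uniq (coneLeft F₁ F₂ c)
      intro K
      have hmK := hm (liftL I K)
      dsimp [cornerCone, coneLeft, cornerDiagram, Monotone.functor] at hmK ⊢
      rw [← hmK, cubeProd_map]
      refine prodAux_fst' _ _ _ _ _ _ ?_
      rw [← F₁.map_comp, ← F₁.map_comp]; exact thin_map_eq F₁ _ _
    have keyR : m ≫ prod.snd ≫ F₂.map (homOfLE eR') = hl₂.lift (coneRight F₁ F₂ c) := by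
      apply hl₂.uniq (coneRight F₁ F₂ c)
      intro L
      have hmL := hm (liftR I L)
      dsimp [cornerCone, coneRight, cornerDiagram, Monotone.functor] at hmL ⊢
      rw [← hmL, cubeProd_map]
      refine prodAux_snd' _ _ _ _ _ _ ?_
      rw [← F₂.map_comp, ← F₂.map_comp]; exact thin_map_eq F₂ _ _
    apply Limits.prod.hom_ext
    · rw [Limits.prod.lift_fst]
      have key2 := keyL =≫ F₁.map (homOfLE eL)
      simp only [Category.assoc] at key2
      exact (prodAux_endo _ _ _ _ (by rw [← F₁.map_comp]; exact thin_map_endo F₁ _)).trans key2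
    · rw [Limits.prod.lift_snd]
      have key2 := keyR =≫ F₂.map (homOfLE eR)
      simp only [Category.assoc] at key2
      exact (prodAux_endo _ _ _ _ (by rw [← F₂.map_comp]; exact thin_map_endo F₂ _)).trans key2
end
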